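/- For every real x with 0 ≤ x ≤ 1, the series ∑_{i=1}^{∞} ((1/2)_{i−1} / (2·i!)) · (1 − (1−x²)^i) converges and equals x. In particular (taking x = 1), ∑_{i=1}^{∞} (1/2)_{i−1}/(2·i!) = 1, equivalently ∑_{i=0}^{∞} (−1/2)_i / i! = 0. -/

import Mathlib

/-- The Pochhammer symbol `(a)_n = a(a+1)⋯(a+n-1)` for a real number `a`. -/
noncomputable def poch (a : ℝ) (n : ℕ) : ℝ := ∏ i ∈ Finset.range n, (a + i)

noncomputable def aa (m : ℕ) : ℝ := poch (1/2) m / (2 * (Nat.factorial (m + 1) : ℝ))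

noncomputable def qq (n : ℕ) : ℝ := poch (1/2) n / (Nat.factorial n : ℝ)

lemma poch_succ (a : ℝ) (n : ℕ) : poch a (n + 1) = poch a n * (a + n) :=
  Finset.prod_range_succ _ _

lemma poch_half_pos (n : ℕ) : 0 < poch (1/2) n := by
  refine Finset.prod_pos fun i _ => by positivity

lemma fact_pos' (n : ℕ) : (0:ℝ) < (Nat.factorial n : ℝ) := by
  exact_mod_cast Nat.factorial_pos n

lemma aa_pos (m : ℕ) : 0 < aa m := by
  have h1 := poch_half_pos m
  have h2 := fact_pos' (m+1)
  unfold aa; positivity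

lemma qq_pos (n : ℕ) : 0 < qq n := by
  have h1 := poch_half_pos n
  have h2 := fact_pos' n
  unfold qq; positivity

lemma aa_eq (m : ℕ) : aa m = qq m - qq (m + 1) := by
  unfold aa qq
  rw [poch_succ, Nat.factorial_succ]
  have h1 : (Nat.factorial m : ℝ) ≠ 0 := (fact_pos' m).ne'
  have h2 : ((m:ℝ) + 1) ≠ 0 := by positivity
  push_cast
  field_simp
  ring_nf

lemma sum_aa (N : ℕ) : ∑ m ∈ Finset.range N, aa m = 1 - qq N := by
  induction N with
  | zero => simp [qq, poch]
  | succ n ih => rw [Finset.sum_range_succ, ih, aa_eq]; ring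

lemma qq_succ (n : ℕ) : qq (n + 1) = qq n * ((1/2 + n) / (n + 1)) := by
  unfold qq
  rw [poch_succ, Nat.factorial_succ]
  have h1 : (Nat.factorial n : ℝ) ≠ 0 := (fact_pos' n).ne'
  have h2 : ((n:ℝ) + 1) ≠ 0 := by positivity
  push_cast
  field_simp

lemma qq_sq_bound (N : ℕ) : qq N ^ 2 * (2 * N + 1) ≤ 1 := by
  induction N with
  | zero => simp [qq, poch]
  | succ n ih =>
      have hqn := qq_pos n
      have hn1 : (0:ℝ) < (n:ℝ) + 1 := by positivity
      have key : qq (n+1) ^ 2 * (2 * ((n:ℕ)+1 : ℕ) + 1) ≤ qq n ^ 2 * (2 * n + 1) := by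
        rw [qq_succ, mul_pow, div_pow]
        push_cast
        rw [mul_assoc]
        have heq : ((1:ℝ)/2 + n)^2/((n:ℝ)+1)^2 * (2*((n:ℝ)+1)+1) ≤ 2*(n:ℝ)+1 := by
          rw [div_mul_eq_mul_div, div_le_iff₀ (by positivity)]
          nlinarith [sq_nonneg ((n:ℝ))]
        exact mul_le_mul_of_nonneg_left heq (sq_nonneg _)
      exact key.trans ih

lemma qq_tendsto : Filter.Tendsto qq Filter.atTop (nhds 0) := by
  have hb : ∀ N : ℕ, qq N ≤ Real.sqrt (1 / (2 * N + 1)) := by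
    intro N
    have h2 : (0:ℝ) < 2 * N + 1 := by positivity
    have h1 : qq N ^ 2 ≤ 1 / (2 * N + 1) := by
      rw [le_div_iff₀ h2]; exact qq_sq_bound N
    calc qq N = Real.sqrt (qq N ^ 2) := (Real.sqrt_sq (qq_pos N).le).symm
      _ ≤ Real.sqrt (1 / (2 * N + 1)) := Real.sqrt_le_sqrt h1
  have hlin : Filter.Tendsto (fun N : ℕ => (2 * N + 1 : ℝ)) Filter.atTop Filter.atTop := by
    apply Filter.tendsto_atTop_add_const_right
    exact (tendsto_natCast_atTop_atTop (R := ℝ)).const_mul_atTop (by norm_num)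
  have h0 : Filter.Tendsto (fun N : ℕ => (1:ℝ) / (2 * N + 1)) Filter.atTop (nhds 0) := by
    exact hlin.inv_tendsto_atTop.congr (fun N => by simp [one_div, Pi.inv_apply])
  have hsq := h0.sqrt
  rw [Real.sqrt_zero] at hsq
  exact squeeze_zero (fun n => (qq_pos n).le) hb hsq

lemma hasSum_aa : HasSum aa 1 := by
  rw [hasSum_iff_tendsto_nat_of_nonneg (fun m => (aa_pos m).le)]
  simp only [sum_aa]
  simpa using (tendsto_const_nhds (x := (1:ℝ))).sub qq_tendsto

noncomputable def cc (n : ℕ) : ℝ := Ring.choose ((1:ℝ)/2) n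

lemma desc_half (m : ℕ) : (descPochhammer ℤ (m+1)).smeval ((1:ℝ)/2) =
    (-1)^m * poch (1/2) m / 2 := by
  induction m with
  | zero => simp [descPochhammer_one, Polynomial.smeval_X, poch]
  | succ n ih =>
      rw [descPochhammer_succ_right, Polynomial.smeval_mul, ih, Polynomial.smeval_sub,
        Polynomial.smeval_X, Polynomial.smeval_natCast, poch_succ, pow_succ]
      push_cast
      ring

lemma cc_eq (m : ℕ) : cc (m+1) = (-1)^m * aa m := by
  have h := Ring.descPochhammer_eq_factorial_smul_choose (R := ℝ) ((1:ℝ)/2) (m+1)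
  rw [desc_half, nsmul_eq_mul] at h
  have h2 : ((m+1).factorial : ℝ) ≠ 0 := by
    exact_mod_cast (Nat.factorial_pos (m+1)).ne'
  unfold cc aa
  field_simp
  linear_combination (-2 : ℝ) * h

lemma cc_zero : cc 0 = 1 := Ring.choose_zero_right _

lemma vandermonde (n : ℕ) :
    ∑ ij ∈ Finset.HasAntidiagonal.antidiagonal n, cc ij.1 * cc ij.2 = (Nat.choose 1 n : ℝ) := by
  have h := Ring.add_choose_eq (r := (1/2:ℝ)) (s := (1/2:ℝ)) n (Commute.all _ _)
  have h2 : (1/2 + 1/2 : ℝ) = ((1:ℕ):ℝ) := by norm_num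
  rw [h2, Ring.choose_natCast] at h
  unfold cc
  rw [← h]


section Main

lemma key_hasSum {y : ℝ} (hy0 : 0 ≤ y) (hy1 : y ≤ 1) : HasSum (fun m : ℕ => aa m * y ^ (m+1)) (1 - Real.sqrt (1 - y)) := by
  set f : ℕ → ℝ := fun k => (-1)^k * cc k * y^k with hf
  have hf0 : f 0 = 1 := by simp [hf, cc_zero]
  have hfs : ∀ m, f (m+1) = -(aa m * y^(m+1)) := by
    intro m
    have h : ((-1:ℝ))^m * (-1)^m = 1 := by rw [← mul_pow]; norm_num
    simp only [hf, cc_eq, pow_succ]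
    calc (-1:ℝ)^m * -1 * ((-1)^m * aa m) * (y^m * y)
        = ((-1:ℝ)^m * (-1)^m) * (-(aa m * (y^m * y))) := by ring
      _ = -(aa m * y^(m+1)) := by rw [h, pow_succ]; ring
  have hfnorm : Summable fun k => ‖f k‖ := by
    have h1 : Summable fun k => ‖f (k+1)‖ := by
      refine Summable.of_nonneg_of_le (fun k => norm_nonneg _) (fun k => ?_)
        hasSum_aa.summable
      rw [hfs k, norm_neg, Real.norm_eq_abs,
        abs_of_nonneg (mul_nonneg (aa_pos k).le (pow_nonneg hy0 _))]
      have hyp : y^(k+1) ≤ 1 := pow_le_one₀ hy0 hy1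
      nlinarith [aa_pos k, (aa_pos k).le]
    exact (summable_nat_add_iff 1).mp h1
  have hfsum : Summable f := hfnorm.of_norm
  have hS : Summable fun m : ℕ => aa m * y^(m+1) := by
    have h2 : Summable fun k : ℕ => f (k+1) := (summable_nat_add_iff 1).mpr hfsum
    simp only [hfs] at h2
    simpa using h2.neg
  have hT : ∑' k, f k = 1 - ∑' m : ℕ, aa m * y^(m+1) := by
    rw [hfsum.tsum_eq_zero_add, hf0]
    simp only [hfs]
    rw [tsum_neg]
    ring
  have hsq : (∑' k, f k) * (∑' k, f k) = 1 - y := by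
    rw [tsum_mul_tsum_eq_tsum_sum_antidiagonal_of_summable_norm hfnorm hfnorm]
    have hco : ∀ n : ℕ, (∑ ij ∈ Finset.HasAntidiagonal.antidiagonal n, f ij.1 * f ij.2)
        = (Nat.choose 1 n : ℝ) * (-y)^n := by
      intro n
      have hterm : ∀ ij ∈ Finset.HasAntidiagonal.antidiagonal n,
          f ij.1 * f ij.2 = cc ij.1 * cc ij.2 * (-y)^n := by
        intro ij hij
        have hn : ij.1 + ij.2 = n := Finset.HasAntidiagonal.mem_antidiagonal.mp hij
        simp only [hf]
        have hpk : ∀ k : ℕ, (-y) ^ k = (-1 : ℝ) ^ k * y ^ k := fun k => neg_pow y k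
        rw [← hn, pow_add, hpk, hpk]
        ring
      rw [Finset.sum_congr rfl hterm, ← Finset.sum_mul, vandermonde]
    rw [tsum_congr hco]
    have hzero : ∀ n : ℕ, n ∉ ({0, 1} : Finset ℕ) → (Nat.choose 1 n : ℝ) * (-y)^n = 0 := by
      intro n hn
      have h1n : 1 < n := by
        simp only [Finset.mem_insert, Finset.mem_singleton] at hn
        omega
      rw [Nat.choose_eq_zero_of_lt h1n]
      simp
    rw [tsum_eq_sum hzero]
    norm_num
    ring
  have hSle : (∑' m : ℕ, aa m * y^(m+1)) ≤ 1 := by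
    have h1 : (∑' m : ℕ, aa m * y^(m+1)) ≤ ∑' m, aa m := by
      refine Summable.tsum_le_tsum (fun m => ?_) hS hasSum_aa.summable
      have hyp : y^(m+1) ≤ 1 := pow_le_one₀ hy0 hy1
      nlinarith [aa_pos m]
    rw [hasSum_aa.tsum_eq] at h1
    exact h1
  have hTnn : 0 ≤ ∑' k, f k := by rw [hT]; linarith
  have hval : ∑' k, f k = Real.sqrt (1 - y) := by
    have h1 : Real.sqrt (1 - y) = Real.sqrt ((∑' k, f k)^2) := by rw [sq, hsq]
    rw [h1, Real.sqrt_sq hTnn]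
  have hfin : (∑' m : ℕ, aa m * y^(m+1)) = 1 - Real.sqrt (1 - y) := by
    rw [← hval, hT]; ring
  exact hfin ▸ hS.hasSum

end Main

/-- For every `x ∈ [0,1]`, `∑_{i=1}^{∞} ((1/2)_{i−1}/(2·i!))·(1 − (1−x²)^i) = x`
(the sum over `i ≥ 1` is indexed by `i = m+1`, `m ∈ ℕ`). In particular,
`∑_{i=1}^{∞} (1/2)_{i−1}/(2·i!) = 1`, equivalently `∑_{i=0}^{∞} (−1/2)_i/i! = 0`. -/
theorem sqrt_series_identity :
    (∀ x : ℝ, 0 ≤ x → x ≤ 1 →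
      HasSum
        (fun m : ℕ => poch (1/2) m / (2 * (Nat.factorial (m + 1) : ℝ)) *
          (1 - (1 - x ^ 2) ^ (m + 1)))
        x) ∧
    HasSum (fun m : ℕ => poch (1/2) m / (2 * (Nat.factorial (m + 1) : ℝ))) 1 ∧
    HasSum (fun i : ℕ => poch (-(1/2)) i / (Nat.factorial i : ℝ)) 0 := by
  refine ⟨?_, hasSum_aa, ?_⟩
  · intro x hx0 hx1
    have hy0 : 0 ≤ 1 - x^2 := by nlinarith
    have hy1 : 1 - x^2 ≤ 1 := by nlinarith
    have hmain := key_hasSum (y := 1 - x^2) hy0 hy1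
    have hx : Real.sqrt (1 - (1 - x^2)) = x := by
      rw [show 1 - (1 - x^2) = x^2 by ring, Real.sqrt_sq hx0]
    rw [hx] at hmain
    have h2 := hasSum_aa.sub hmain
    have h3 : (1 : ℝ) - (1 - x) = x := by ring
    rw [h3] at h2
    have h4 : (fun m : ℕ => aa m - aa m * (1 - x^2)^(m+1))
        = fun m : ℕ => aa m * (1 - (1 - x^2)^(m+1)) := by
      funext m; ring
    rw [h4] at h2
    exact h2
  · have hg0 : poch (-(1/2)) 0 / (Nat.factorial 0 : ℝ) = 1 := by
      simp [poch]
    have hgs : ∀ i : ℕ, poch (-(1/2)) (i+1) / (Nat.factorial (i+1) : ℝ) = -(aa i) := by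
      intro i
      have hp : poch (-(1/2)) (i+1) = poch (1/2) i * (-(1/2)) := by
        unfold poch
        rw [Finset.prod_range_succ']
        congr 1
        · refine Finset.prod_congr rfl fun j _ => ?_
          push_cast
          ring
        · norm_num
      rw [hp]
      unfold aa
      have h2 : ((i+1).factorial : ℝ) ≠ 0 := by
        exact_mod_cast (Nat.factorial_pos (i+1)).ne'
      field_simp
    have h1 : HasSum (fun i : ℕ => poch (-(1/2)) (i+1) / (Nat.factorial (i+1) : ℝ)) (-1) := by
      simp only [hgs]
      exact hasSum_aa.neg
    have h2 := (hasSum_nat_add_iff (f := fun i : ℕ => poch (-(1/2)) i / (Nat.factorial i : ℝ)) 1).mp h1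
    simpa [poch] using h2
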